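/- arXiv:1804.05037 — 7 statements merged into one kernel-verified Lean document; each statement's English description precedes it below -/
import Mathlib

section
/- Partition lemma: Let Σ be a finite nonempty alphabet, let h be a history of even length less than n, and let W(I|·) and W(A|·) denote relative widths of sets A ⊆ I ⊆ Σ^n (defined by the standard recursion). Suppose m^A, m^I are integers with 0 ≤ m^A ≤ m^I ≤ W(I|h) and m^A ≤ W(A|h). Then there exist functions m^A_·, m^I_· : Σ → ℤ such that Σ_{u∈Σ} m^A_u = m^A, Σ_{u∈Σ} m^I_u = m^I, and for all u ∈ Σ: 0 ≤ m^A_u ≤ m^I_u ≤ W(I|hu) and m^A_u ≤ W(A|hu). -/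
open Classical in
noncomputable def widthAux {α : Type*} [Fintype α] [Nonempty α] (X : Set (List α)) :
    ℕ → List α → ℕ
  | 0, h => if h ∈ X then 1 else 0
  | g + 1, h =>
    if Even h.length then ∑ u : α, widthAux X g (h ++ [u])
    else Finset.univ.inf' Finset.univ_nonempty fun u : α => widthAux X g (h ++ [u])

noncomputable def width {α : Type*} [Fintype α] [Nonempty α] (n : ℕ) (X : Set (List α))
    (h : List α) : ℕ :=
  widthAux X (n - h.length) h

open Classical in
lemma widthAux_mono {α : Type*} [Fintype α] [Nonempty α] {A I : Set (List α)}
    (hAI : A ⊆ I) : ∀ g h, widthAux A g h ≤ widthAux I g h := by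
  intro g
  induction g with
  | zero =>
    intro h
    simp only [widthAux]
    split
    · simp [hAI ‹h ∈ A›]
    · positivity
  | succ g ih =>
    intro h
    simp only [widthAux]
    split
    · exact Finset.sum_le_sum fun u _ => ih _
    · exact Finset.le_inf' _ _ fun u hu => (Finset.inf'_le _ hu).trans (ih _)

lemma width_eq_sum {α : Type*} [Fintype α] [Nonempty α] (n : ℕ) (X : Set (List α))
    (h : List α) (hlt : h.length < n) (heven : Even h.length) :
    width n X h = ∑ u : α, width n X (h ++ [u]) := by
  have hn : n - h.length = (n - h.length - 1) + 1 := by omega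
  rw [width, hn, widthAux, if_pos heven]
  refine Finset.sum_congr rfl fun u _ => ?_
  have : n - (h ++ [u]).length = n - h.length - 1 := by
    simp; omega
  rw [width, this]

lemma exists_interp {α : Type*} (s : Finset α) (lo hi : α → ℤ)
    (hle : ∀ u ∈ s, lo u ≤ hi u) :
    ∀ m : ℤ, (∑ u ∈ s, lo u) ≤ m → m ≤ (∑ u ∈ s, hi u) →
    ∃ c : α → ℤ, (∀ u ∈ s, lo u ≤ c u ∧ c u ≤ hi u) ∧ ∑ u ∈ s, c u = m := by
  classical
  induction s using Finset.cons_induction with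
  | empty =>
    intro m hm1 hm2
    exact ⟨0, by simp, by simp at hm1 hm2 ⊢; omega⟩
  | cons x s hx ih =>
    intro m hm1 hm2
    rw [Finset.sum_cons] at hm1 hm2
    have hle' : ∀ u ∈ s, lo u ≤ hi u := fun u hu => hle u (Finset.mem_cons_of_mem hu)
    have hx' : lo x ≤ hi x := hle x (Finset.mem_cons_self x s)
    set t := ∑ u ∈ s, lo u
    set T := ∑ u ∈ s, hi u
    have htT : t ≤ T := Finset.sum_le_sum hle'
    set cx : ℤ := max (lo x) (min (hi x) (m - t)) with hcx
    have hcx1 : lo x ≤ cx := le_max_left _ _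
    have hcx2 : cx ≤ hi x := by
      apply max_le hx'
      exact min_le_left _ _
    have hr1 : t ≤ m - cx := by
      rcases le_total (m - t) (hi x) with hc | hc
      · rcases le_total (m - t) (lo x) with hd | hd
        · have : cx = lo x := by rw [hcx]; omega
          omega
        · have : cx = m - t := by rw [hcx]; omega
          omega
      · have : cx = hi x := by rw [hcx]; omega
        omega
    have hr2 : m - cx ≤ T := by omega
    obtain ⟨c, hc1, hc2⟩ := ih hle' (m - cx) hr1 hr2
    refine ⟨Function.update c x cx, ?_, ?_⟩
    · intro u hu
      rcases Finset.mem_cons.mp hu with rfl | hu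
      · simp [hcx1, hcx2]
      · have hne : u ≠ x := fun h => hx (h ▸ hu)
        simpa [Function.update_of_ne hne] using hc1 u hu
    · rw [Finset.sum_cons, Function.update_self]
      have : ∑ u ∈ s, Function.update c x cx u = ∑ u ∈ s, c u := by
        refine Finset.sum_congr rfl fun u hu => ?_
        have hne : u ≠ x := fun he => hx (he ▸ hu)
        exact Function.update_of_ne hne _ _
      omega

theorem partition_lemma {α : Type*} [Fintype α] [Nonempty α] (n : ℕ)
    (A I : Set (List α)) (hAI : A ⊆ I) (hI : I ⊆ {w | w.length = n})
    (h : List α) (hlt : h.length < n) (heven : Even h.length)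
    (mA mI : ℤ) (h0 : 0 ≤ mA) (h1 : mA ≤ mI) (h2 : mI ≤ (width n I h : ℤ))
    (h3 : mA ≤ (width n A h : ℤ)) :
    ∃ f g : α → ℤ, (∑ u : α, f u) = mA ∧ (∑ u : α, g u) = mI ∧
      ∀ u : α, 0 ≤ f u ∧ f u ≤ g u ∧ g u ≤ (width n I (h ++ [u]) : ℤ) ∧
        f u ≤ (width n A (h ++ [u]) : ℤ) := by
  have hAsum := width_eq_sum n A h hlt heven
  have hIsum := width_eq_sum n I h hlt heven
  have hab : ∀ u : α, (width n A (h ++ [u]) : ℤ) ≤ (width n I (h ++ [u]) : ℤ) := by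
    intro u
    exact_mod_cast widthAux_mono hAI _ _
  -- find f
  obtain ⟨f, hf1, hf2⟩ := exists_interp Finset.univ (fun _ => (0 : ℤ))
    (fun u => (width n A (h ++ [u]) : ℤ)) (fun u _ => Int.ofNat_nonneg _) mA
    (by simp [h0]) (by rw [← Nat.cast_sum, ← hAsum]; exact h3)
  obtain ⟨g, hg1, hg2⟩ := exists_interp Finset.univ f
    (fun u => (width n I (h ++ [u]) : ℤ))
    (fun u _ => le_trans (hf1 u (Finset.mem_univ u)).2 (hab u)) mI
    (by rw [hf2]; exact h1) (by rw [← Nat.cast_sum, ← hIsum]; exact h2)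
  exact ⟨f, g, hf2, hg2, fun u =>
    ⟨(hf1 u (Finset.mem_univ u)).1, (hg1 u (Finset.mem_univ u)).1,
     (hg1 u (Finset.mem_univ u)).2, (hf1 u (Finset.mem_univ u)).2⟩⟩
end

section
/- Necessity of the width conditions: suppose σ is a strategy such that for every adversary strategy τ, P_{σ,τ}(I) = 1, P_{σ,τ}(A) ≥ 1−ε, and P_{σ,τ}(π) ≤ ρ for every play π ∈ Σ^n. Then the width of I satisfies W(I) ≥ 1/ρ and the width of A satisfies W(A) ≥ (1−ε)/ρ, where W(X) = max_σ min_τ |X ∩ Π_{σ,τ}| and Π_{σ,τ} is the set of plays with positive probability under (σ,τ). -/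
/-- Probability of generating the continuation `rest` from history `h`, where the
player picks at even-length histories (strategy `σ`) and the adversary at odd-length
ones (strategy `τ`). -/
noncomputable def playProbAux {α : Type*} (σ τ : List α → α → ℝ) :
    List α → List α → ℝ
  | _, [] => 1
  | h, u :: rest => (if Even h.length then σ h u else τ h u) * playProbAux σ τ (h ++ [u]) rest

/-- Probability of the play `π`. -/
noncomputable def playProb {α : Type*} (σ τ : List α → α → ℝ) (π : List α) : ℝ :=
  playProbAux σ τ [] π

/-- `σ` is a valid (randomized) strategy for games of length `n`. -/
def IsStrategy {α : Type*} [Fintype α] (n : ℕ) (σ : List α → α → ℝ) : Prop :=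
  ∀ h : List α, h.length < n → (∀ u : α, 0 ≤ σ h u) ∧ (∑ u : α, σ h u) = 1

open Classical in
/-- Probability that the generated length-`n` play lies in `X`. -/
noncomputable def probOf {α : Type*} [Fintype α] (n : ℕ) (σ τ : List α → α → ℝ)
    (X : Set (List α)) : ℝ :=
  ∑ f : Fin n → α, if List.ofFn f ∈ X then playProb σ τ (List.ofFn f) else 0

lemma playProbAux_nonneg {α : Type*} [Fintype α] {n : ℕ} {σ τ : List α → α → ℝ}
    (hσ : IsStrategy n σ) (hτ : IsStrategy n τ) :
    ∀ (rest h : List α), h.length + rest.length ≤ n → 0 ≤ playProbAux σ τ h rest := by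
  intro rest
  induction rest with
  | nil => intro h _; simp [playProbAux]
  | cons u rest ih =>
    intro h hlen
    simp only [List.length_cons] at hlen
    have hlt : h.length < n := by omega
    have h1 : 0 ≤ (if Even h.length then σ h u else τ h u) := by
      split
      · exact (hσ h hlt).1 u
      · exact (hτ h hlt).1 u
    have h2 : 0 ≤ playProbAux σ τ (h ++ [u]) rest := by
      apply ih; simp; omega
    exact mul_nonneg h1 h2

lemma key_bound {α : Type*} [Fintype α] {n : ℕ} {σ τ : List α → α → ℝ}
    (hσ : IsStrategy n σ) (hτ : IsStrategy n τ) (X : Set (List α)) {ρ : ℝ}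
    (hbound : ∀ f : Fin n → α, playProb σ τ (List.ofFn f) ≤ ρ) :
    probOf n σ τ X ≤ ρ * (Set.ncard {f : Fin n → α | List.ofFn f ∈ X ∧ 0 < playProb σ τ (List.ofFn f)}) := by
  classical
  set p : (Fin n → α) → ℝ := fun f => playProb σ τ (List.ofFn f) with hp
  have hpn : ∀ f, 0 ≤ p f := fun f => by
    apply playProbAux_nonneg hσ hτ
    simp
  set S : Finset (Fin n → α) := Finset.univ.filter (fun f => List.ofFn f ∈ X ∧ 0 < p f) with hS
  have hcard : ({f : Fin n → α | List.ofFn f ∈ X ∧ 0 < p f} : Set _).ncard = S.card := by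
    rw [← Set.ncard_coe_finset]
    congr 1
    ext f; simp [hS]
  rw [hcard]
  have heq : probOf n σ τ X = ∑ f ∈ S, p f := by
    rw [probOf, hS, Finset.sum_filter]
    apply Finset.sum_congr rfl
    intro f _
    by_cases hx : List.ofFn f ∈ X
    · by_cases hpos : 0 < p f
      · simp [hx, hpos]; rfl
      · have : p f = 0 := le_antisymm (not_lt.mp hpos) (hpn f)
        simp only [hx, if_true, hpos, if_false]
        exact this
    · simp [hx]
  rw [heq]
  calc ∑ f ∈ S, p f ≤ ∑ _f ∈ S, ρ := Finset.sum_le_sum (fun f _ => hbound f)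
    _ = S.card * ρ := by rw [Finset.sum_const, nsmul_eq_mul]
    _ = ρ * S.card := mul_comm _ _

theorem width_necessity {α : Type*} [Fintype α] [Nonempty α] (n : ℕ)
    (A I : Set (List α)) (hAI : A ⊆ I) (hI : I ⊆ {w | w.length = n})
    (ε ρ : ℚ) (hε0 : 0 ≤ ε) (hε1 : ε ≤ 1) (hρ0 : 0 < ρ) (hρ1 : ρ ≤ 1)
    (σ : List α → α → ℝ) (hσ : IsStrategy n σ)
    (himpro : ∀ τ : List α → α → ℝ, IsStrategy n τ →
      probOf n σ τ I = 1 ∧ probOf n σ τ A ≥ 1 - (ε : ℝ) ∧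
      ∀ f : Fin n → α, playProb σ τ (List.ofFn f) ≤ (ρ : ℝ)) :
    ∀ τ : List α → α → ℝ, IsStrategy n τ →
      (1 / (ρ : ℝ) ≤
        (Set.ncard {f : Fin n → α | List.ofFn f ∈ I ∧ 0 < playProb σ τ (List.ofFn f)} : ℝ)) ∧
      ((1 - (ε : ℝ)) / (ρ : ℝ) ≤
        (Set.ncard {f : Fin n → α | List.ofFn f ∈ A ∧ 0 < playProb σ τ (List.ofFn f)} : ℝ)) := by
  intro τ hτ
  obtain ⟨hI1, hA1, hbound⟩ := himpro τ hτ
  have hρ0' : (0 : ℝ) < (ρ : ℝ) := by exact_mod_cast hρ0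
  constructor
  · rw [div_le_iff₀ hρ0']
    have := key_bound hσ hτ I hbound
    rw [hI1] at this
    linarith [this]
  · rw [div_le_iff₀ hρ0']
    have := key_bound hσ hτ A hbound
    linarith [this]
end

section
/- Bounding the improviser weights: under the same setup (w_A ≤ w_I, w_I ≥ 1/ρ, α = min(ρ, 1/w_A) or 0 if w_A = 0, β = (1 − α·w_A)/(w_I − w_A) or 0 if w_I = w_A), we have max(α, β) ≤ ρ. -/
theorem improviser_weights_le_rho (ρ wA wI α β : ℝ)
    (hρ0 : 0 < ρ) (hρ1 : ρ ≤ 1)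
    (hwA : 0 ≤ wA) (hwAI : wA ≤ wI) (hwI : 1 / ρ ≤ wI)
    (hα0 : wA = 0 → α = 0) (hα : wA ≠ 0 → α = min ρ (1 / wA))
    (hβ0 : wI = wA → β = 0) (hβ : wI ≠ wA → β = (1 - α * wA) / (wI - wA)) :
    max α β ≤ ρ := by
  have hρwI : 1 ≤ ρ * wI := by
    have := (div_le_iff₀ hρ0).mp hwI
    linarith [mul_comm wI ρ]
  have hαle : α ≤ ρ := by
    rcases eq_or_ne wA 0 with h | h
    · rw [hα0 h]; exact le_of_lt hρ0
    · rw [hα h]; exact min_le_left _ _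
  have hβle : β ≤ ρ := by
    rcases eq_or_ne wI wA with h | h
    · rw [hβ0 h]; exact le_of_lt hρ0
    · rw [hβ h]
      have hlt : wA < wI := lt_of_le_of_ne hwAI (Ne.symm h)
      have hpos : 0 < wI - wA := by linarith
      rw [div_le_iff₀ hpos]
      rcases eq_or_ne wA 0 with h0 | h0
      · subst h0; simp; nlinarith
      · rw [hα h0]
        have hwApos : 0 < wA := lt_of_le_of_ne hwA (Ne.symm h0)
        rcases min_cases ρ (1 / wA) with ⟨he, hle⟩ | ⟨he, hle⟩
        · rw [he]; nlinarith
        · rw [he]; field_simp; nlinarith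
  exact max_le hαle hβle
end

section
/- DFA width correspondence: let D be a DFA with state set V, transition function δ : V × Σ → V, accepting states T, and initial state q₀. Define C(v,i) for v ∈ V and 0 ≤ i ≤ n by: C(v,n) = indicator(v ∈ T); for i < n odd, C(v,i) = min_{u∈Σ} C(δ(v,u), i+1); for i < n even, C(v,i) = Σ_{u∈Σ} C(δ(v,u), i+1). Then for every history h ∈ Σ^{≤n}, the relative width W(X|h) of X = L(D) ∩ Σ^n (defined by the standard width recursion on histories) equals C(D(h), |h|), where D(h) is the state reached by running D on h from q₀. -/
open Classical in
/-- `dfaCAux δ T g v i` computes the table entry `C(v, i)` with fuel `g = n - i`. -/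
noncomputable def dfaCAux {α V : Type*} [Fintype α] [Nonempty α]
    (δ : V → α → V) (T : Set V) : ℕ → V → ℕ → ℕ
  | 0, v, _ => if v ∈ T then 1 else 0
  | g + 1, v, i =>
    if Even i then ∑ u : α, dfaCAux δ T g (δ v u) (i + 1)
    else Finset.univ.inf' Finset.univ_nonempty fun u : α => dfaCAux δ T g (δ v u) (i + 1)

/-- `C(v, i)` for the length-`n` game. -/
noncomputable def dfaC {α V : Type*} [Fintype α] [Nonempty α]
    (δ : V → α → V) (T : Set V) (n i : ℕ) (v : V) : ℕ :=
  dfaCAux δ T (n - i) v i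

theorem dfa_width_eq {α V : Type*} [Fintype α] [Nonempty α]
    (δ : V → α → V) (T : Set V) (q0 : V) (n : ℕ)
    (h : List α) (hh : h.length ≤ n) :
    width n {w : List α | w.length = n ∧ w.foldl δ q0 ∈ T} h =
      dfaC δ T n h.length (h.foldl δ q0) := by
  unfold width dfaC
  have key : ∀ g (h : List α), h.length + g = n →
      widthAux {w : List α | w.length = n ∧ w.foldl δ q0 ∈ T} g h =
        dfaCAux δ T g (h.foldl δ q0) h.length := by
    intro g
    induction g with
    | zero =>
      intro h hlen
      simp only [widthAux, dfaCAux, Set.mem_setOf_eq]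
      simp at hlen
      split_ifs with h1 h2 h3 <;> simp_all
    | succ g ih =>
      intro h hlen
      simp only [widthAux, dfaCAux]
      have step : ∀ u : α,
          widthAux {w : List α | w.length = n ∧ w.foldl δ q0 ∈ T} g (h ++ [u]) =
            dfaCAux δ T g (δ (h.foldl δ q0) u) (h.length + 1) := by
        intro u
        have := ih (h ++ [u]) (by simp; omega)
        simpa [List.foldl_append] using this
      by_cases he : Even h.length <;> simp [he, step]
  exact key (n - h.length) h (by omega)
end

section
/- Impossibility of per-adversary-optimal strategies: there exists a finite two-player alternating game over an alphabet with at most 2 symbols per move, a length n, and a target set A of plays, together with two deterministic adversary strategies τ₁, τ₂, such that: there exists a strategy σ₁ with P_{σ₁,τ₁}(A) = 1, there exists a strategy σ₂ with P_{σ₂,τ₂}(A) = 1, but there is no single strategy σ with both P_{σ,τ₁}(A) = 1 and P_{σ,τ₂}(A) = 1. -/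
open Classical in
/-- The strategy deterministically playing `t h` at history `h`. -/
noncomputable def detStrat {α : Type*} (t : List α → α) : List α → α → ℝ :=
  fun h u => if u = t h then 1 else 0

open Classical in
lemma probOf_two (σ τ : List (Fin 2) → Fin 2 → ℝ) (X : Set (List (Fin 2))) :
    probOf 2 σ τ X = ∑ a : Fin 2, ∑ b : Fin 2,
      if [a, b] ∈ X then σ [] a * (τ [a] b * 1) else 0 := by
  rw [probOf, ← Equiv.sum_comp (piFinTwoEquiv fun _ => Fin 2).symm, Fintype.sum_prod_type]
  refine Finset.sum_congr rfl fun a _ => Finset.sum_congr rfl fun b _ => ?_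
  simp [playProb, playProbAux, List.ofFn_succ, piFinTwoEquiv]

/-- There is a finite alternating game (alphabet of size 2) with two deterministic
adversaries such that some strategy surely wins against each adversary separately,
but no single strategy surely wins against both. -/
theorem no_per_adversary_optimal_strategy :
    ∃ (n : ℕ) (A : Set (List (Fin 2))) (τ₁ τ₂ : List (Fin 2) → Fin 2),
      (∃ σ₁, IsStrategy n σ₁ ∧ probOf n σ₁ (detStrat τ₁) A = 1) ∧
      (∃ σ₂, IsStrategy n σ₂ ∧ probOf n σ₂ (detStrat τ₂) A = 1) ∧
      ¬ ∃ σ, IsStrategy n σ ∧ probOf n σ (detStrat τ₁) A = 1 ∧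
          probOf n σ (detStrat τ₂) A = 1 := by
  classical
  refine ⟨2, {l | l = [0, 0] ∨ l = [1, 1]}, fun _ => 0, fun _ => 1, ?_, ?_, ?_⟩
  · refine ⟨detStrat (fun _ => 0), ?_, ?_⟩
    · intro h _
      constructor
      · intro u; simp [detStrat]; split <;> norm_num
      · simp [detStrat, Fin.sum_univ_two]
    · rw [probOf_two]
      simp [detStrat, Fin.sum_univ_two]
  · refine ⟨detStrat (fun _ => 1), ?_, ?_⟩
    · intro h _
      constructor
      · intro u; simp [detStrat]; split <;> norm_num
      · simp [detStrat, Fin.sum_univ_two]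
    · rw [probOf_two]
      simp [detStrat, Fin.sum_univ_two]
  · rintro ⟨σ, hs, h1, h2⟩
    rw [probOf_two] at h1 h2
    simp [detStrat, Fin.sum_univ_two] at h1 h2
    have := (hs [] (by norm_num)).2
    rw [Fin.sum_univ_two, h1, h2] at this
    norm_num at this
end

section
/- Existence of plays achieving the width: with W(X|h) the recursively-defined relative width over a finite alphabet Σ, if W(X|h) ≥ 1 for a history h, then for every function τ assigning to each odd-length history extending h a symbol of Σ (a deterministic adversary), there exists a word π with hπ ∈ X such that at every odd position of hπ beyond |h|, the symbol of π agrees with τ applied to the preceding prefix. -/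
/-- `π` (a continuation of `h`) is consistent with the deterministic adversary `t`:
at every odd position `i` of `h ++ π` beyond `h`, the symbol played equals `t`
applied to the preceding prefix. -/
def ConsistentWith {α : Type*} (n : ℕ) (h : List α) (t : List α → α) (π : List α) : Prop :=
  ∀ i : ℕ, h.length ≤ i → i < n → Odd i →
    (h ++ π).take (i + 1) = (h ++ π).take i ++ [t ((h ++ π).take i)]

lemma widthAux_pos_aux {α : Type*} [Fintype α] [Nonempty α] (X : Set (List α))
    (t : List α → α) :
    ∀ g : ℕ, ∀ h : List α, 1 ≤ widthAux X g h →
      ∃ π : List α, π.length = g ∧ h ++ π ∈ X ∧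
        ∀ i : ℕ, h.length ≤ i → i < h.length + g → Odd i →
          (h ++ π).take (i + 1) = (h ++ π).take i ++ [t ((h ++ π).take i)] := by
  intro g
  induction g with
  | zero =>
    intro h hw
    simp only [widthAux] at hw
    refine ⟨[], rfl, ?_, ?_⟩
    · by_cases hX : h ∈ X
      · simpa using hX
      · simp [hX] at hw
    · intro i h1 h2 _; omega
  | succ g ih =>
    intro h hw
    simp only [widthAux] at hw
    by_cases he : Even h.length
    · rw [if_pos he] at hw
      have : ∃ u : α, widthAux X g (h ++ [u]) ≠ 0 := by
        by_contra hc
        push_neg at hc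
        simp [Finset.sum_congr rfl fun u _ => hc u] at hw
      obtain ⟨u, hu⟩ := this
      obtain ⟨π', hlen, hmem, hcons⟩ := ih (h ++ [u]) (Nat.one_le_iff_ne_zero.mpr hu)
      refine ⟨u :: π', by simp [hlen], by simpa using hmem, ?_⟩
      intro i h1 h2 hodd
      have hne : i ≠ h.length := by
        rintro rfl
        exact (Nat.not_odd_iff_even.mpr he) hodd
      have h1' : (h ++ [u]).length ≤ i := by simp; omega
      have := hcons i h1' (by simp; omega) hodd
      simpa using this
    · rw [if_neg he] at hw
      have hu : 1 ≤ widthAux X g (h ++ [t h]) := by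
        have := Finset.inf'_le (f := fun u : α => widthAux X g (h ++ [u]))
          (b := t h) (Finset.mem_univ _)
        omega
      obtain ⟨π', hlen, hmem, hcons⟩ := ih (h ++ [t h]) hu
      refine ⟨t h :: π', by simp [hlen], by simpa using hmem, ?_⟩
      intro i h1 h2 hodd
      by_cases hi : i = h.length
      · subst hi
        have h3 : (h ++ t h :: π').take h.length = h := List.take_left
        rw [h3, show h ++ t h :: π' = h ++ (t h :: π') from rfl, List.take_append]
        simp
      · have h1' : (h ++ [t h]).length ≤ i := by simp; omega
        have := hcons i h1' (by simp; omega) hodd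
        simpa using this

theorem width_pos_play_exists {α : Type*} [Fintype α] [Nonempty α] (n : ℕ)
    (X : Set (List α)) (hX : X ⊆ {w | w.length = n})
    (h : List α) (hh : h.length ≤ n) (hw : 1 ≤ width n X h)
    (t : List α → α) :
    ∃ π : List α, h ++ π ∈ X ∧ ConsistentWith n h t π := by
  obtain ⟨π, hlen, hmem, hcons⟩ := widthAux_pos_aux X t (n - h.length) h hw
  refine ⟨π, hmem, ?_⟩
  intro i h1 h2 hodd
  exact hcons i h1 (by omega) hodd
end

section
/- Deterministic-adversary counting: with W(X|h) the recursively-defined relative width, for every history h and every deterministic adversary τ (a function from odd-length histories to Σ), the number of words π with hπ ∈ X that are consistent with τ at all odd positions is at least W(X|h). -/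
lemma consistent_cons {α : Type*} (n : ℕ) (h : List α) (t : List α → α) (u : α) (π : List α)
    (hu : Odd h.length → u = t h)
    (hc : ConsistentWith n (h ++ [u]) t π) :
    ConsistentWith n h t (u :: π) := by
  intro i hi hin hodd
  have heq : h ++ u :: π = (h ++ [u]) ++ π := by simp
  rcases eq_or_lt_of_le hi with hEq | hlt
  · subst hEq
    rw [heq]
    have h0 : ((h ++ [u]) ++ π).take h.length = h := by
      rw [List.take_append_of_le_length (by simp)]
      rw [List.take_append_of_le_length (by simp), List.take_length]
    have h1 : ((h ++ [u]) ++ π).take (h.length + 1) = h ++ [u] := by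
      rw [List.append_assoc, List.take_append]
      simp
    rw [h0, h1, hu hodd]
  · have := hc i (by simpa using hlt) hin hodd
    rw [heq]
    exact this

lemma cons_mem_set {α : Type*} (n : ℕ) (X : Set (List α)) (t : List α → α)
    (g : ℕ) (h : List α) (u : α) (f : Fin g → α)
    (hu : Odd h.length → u = t h)
    (hf : (h ++ [u]) ++ List.ofFn f ∈ X ∧ ConsistentWith n (h ++ [u]) t (List.ofFn f)) :
    h ++ List.ofFn (Fin.cons u f : Fin (g + 1) → α) ∈ X ∧
      ConsistentWith n h t (List.ofFn (Fin.cons u f : Fin (g + 1) → α)) := by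
  have hofn : List.ofFn (Fin.cons u f : Fin (g + 1) → α) = u :: List.ofFn f := by
    simp [List.ofFn_succ]
  rw [hofn]
  constructor
  · simpa using hf.1
  · exact consistent_cons n h t u _ hu hf.2

lemma widthAux_le_count {α : Type*} [Fintype α] [Nonempty α] (X : Set (List α)) (n : ℕ)
    (t : List α → α) :
    ∀ (g : ℕ) (h : List α), h.length + g = n →
      widthAux X g h ≤
        Set.ncard {f : Fin g → α | h ++ List.ofFn f ∈ X ∧ ConsistentWith n h t (List.ofFn f)} := by
  intro g
  induction g with
  | zero =>
    intro h hlen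
    rw [widthAux]
    split_ifs with hmem
    · have hne : ({f : Fin 0 → α | h ++ List.ofFn f ∈ X ∧
          ConsistentWith n h t (List.ofFn f)}).Nonempty := by
        refine ⟨fun i => i.elim0, by simpa using hmem, ?_⟩
        intro i hi hin _
        omega
      exact (Set.ncard_pos (Set.toFinite _)).mpr hne
    · exact Nat.zero_le _
  | succ g IH =>
    intro h hlen
    classical
    -- the target set
    set T : Set (Fin (g + 1) → α) :=
      {f : Fin (g + 1) → α | h ++ List.ofFn f ∈ X ∧ ConsistentWith n h t (List.ofFn f)} with hT
    -- the fiber sets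
    set S : α → Set (Fin g → α) := fun u =>
      {f : Fin g → α | (h ++ [u]) ++ List.ofFn f ∈ X ∧
        ConsistentWith n (h ++ [u]) t (List.ofFn f)} with hS
    have hIH : ∀ u : α, widthAux X g (h ++ [u]) ≤ (S u).ncard := by
      intro u
      exact IH (h ++ [u]) (by simp; omega)
    have hinj : ∀ u : α,
        Function.Injective (fun f : Fin g → α => (Fin.cons u f : Fin (g + 1) → α)) :=
      fun u a b hab => funext fun i => by simpa using congrFun hab i.succ
    have himg : ∀ u : α, (Odd h.length → u = t h) →
        (fun f : Fin g → α => (Fin.cons u f : Fin (g + 1) → α)) '' S u ⊆ T := by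
      rintro u hu x ⟨f, hf, rfl⟩
      exact cons_mem_set n X t g h u f hu hf
    rw [widthAux]
    split_ifs with heven
    · -- even case: sum over u
      have hdisj : ∀ u ∈ (Finset.univ : Finset α), ∀ v ∈ (Finset.univ : Finset α), u ≠ v →
          Disjoint (Set.toFinite ((fun f : Fin g → α =>
              (Fin.cons u f : Fin (g + 1) → α)) '' S u)).toFinset
            (Set.toFinite ((fun f : Fin g → α =>
              (Fin.cons v f : Fin (g + 1) → α)) '' S v)).toFinset := by
        intro u _ v _ huv
        rw [Finset.disjoint_left]
        rintro x hxu hxv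
        rw [Set.Finite.mem_toFinset] at hxu hxv
        obtain ⟨a, _, rfl⟩ := hxu
        obtain ⟨b, _, hb⟩ := hxv
        exact huv (by simpa using (congrFun hb 0).symm)
      calc ∑ u : α, widthAux X g (h ++ [u])
          ≤ ∑ u : α, (S u).ncard := Finset.sum_le_sum fun u _ => hIH u
        _ = ∑ u : α, ((Set.toFinite ((fun f : Fin g → α =>
              (Fin.cons u f : Fin (g + 1) → α)) '' S u)).toFinset).card := by
            refine Finset.sum_congr rfl fun u _ => ?_
            rw [← Set.ncard_eq_toFinset_card, Set.ncard_image_of_injective _ (hinj u)]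
        _ = (Finset.univ.biUnion fun u : α => (Set.toFinite ((fun f : Fin g → α =>
              (Fin.cons u f : Fin (g + 1) → α)) '' S u)).toFinset).card :=
            (Finset.card_biUnion hdisj).symm
        _ ≤ ((Set.toFinite T).toFinset).card := by
            apply Finset.card_le_card
            intro x hx
            rw [Finset.mem_biUnion] at hx
            obtain ⟨u, _, hxu⟩ := hx
            rw [Set.Finite.mem_toFinset] at hxu ⊢
            exact himg u (fun hodd => absurd heven (by simp [Nat.not_even_iff_odd.mpr hodd])) hxu
        _ = T.ncard := (Set.ncard_eq_toFinset_card ..).symm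
    · -- odd case: infimum; take u = t h
      have hodd : Odd h.length := Nat.not_even_iff_odd.mp heven
      calc (Finset.univ.inf' Finset.univ_nonempty fun u : α => widthAux X g (h ++ [u]))
          ≤ widthAux X g (h ++ [t h]) := Finset.inf'_le _ (Finset.mem_univ (t h))
        _ ≤ (S (t h)).ncard := hIH (t h)
        _ = ((fun f : Fin g → α => (Fin.cons (t h) f : Fin (g + 1) → α)) '' S (t h)).ncard :=
            (Set.ncard_image_of_injective _ (hinj (t h))).symm
        _ ≤ T.ncard := Set.ncard_le_ncard (himg (t h) fun _ => rfl) (Set.toFinite T)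

theorem width_le_consistent_count {α : Type*} [Fintype α] [Nonempty α] (n : ℕ)
    (X : Set (List α)) (hX : X ⊆ {w | w.length = n})
    (h : List α) (hh : h.length ≤ n) (t : List α → α) :
    width n X h ≤
      Set.ncard {f : Fin (n - h.length) → α |
        h ++ List.ofFn f ∈ X ∧ ConsistentWith n h t (List.ofFn f)} := by
  exact widthAux_le_count X n t (n - h.length) h (by omega)
end
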